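/- Let p be a prime, p^r a prime power, n ≥ p^r, and k a field. Let λ and μ be p^r-stable partitions of n and let H ≤ S_{p^r} be a subgroup whose action on B is transitive. Then the k-dimension of the space of S_n-equivariant k-linear maps from the permutation representation k[Tab^λ] to the permutation representation k[Tab^μ] equals the k-dimension of the space of S_{n−p^r}-equivariant k-linear maps from k[(Tab^λ)^H] to k[(Tab^μ)^H], where (Tab^λ)^H and (Tab^μ)^H carry their natural S_{n−p^r}-actions. -/

import Mathlib

/-- `f : Fin n → Fin ℓ` is a tableau of shape `lam`: the fiber over `i` has
cardinality `lam i`. -/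
def TabP {n ℓ : ℕ} (lam : Fin ℓ → ℕ) (f : Fin n → Fin ℓ) : Prop :=
  ∀ i : Fin ℓ, (Finset.univ.filter fun a => f a = i).card = lam i

lemma card_fiber_comp {n ℓ : ℕ} (f : Fin n → Fin ℓ) (σ : Equiv.Perm (Fin n))
    (i : Fin ℓ) :
    (Finset.univ.filter fun a => f (σ a) = i).card =
      (Finset.univ.filter fun a => f a = i).card := by
  have h : (Finset.univ.filter fun a => f a = i) =
      (Finset.univ.filter fun a => f (σ a) = i).map σ.toEmbedding := by
    ext b
    simp only [Finset.mem_filter, Finset.mem_univ, true_and, Finset.mem_map,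
      Equiv.coe_toEmbedding]
    constructor
    · intro hb
      exact ⟨σ.symm b, by simpa using hb, by simp⟩
    · rintro ⟨a, ha, rfl⟩
      exact ha
  rw [h, Finset.card_map]

/-- The action of a permutation `σ ∈ S_n` on tableaux of shape `lam`
(this is the action of `σ⁻¹`, i.e. `f ↦ f ∘ σ`). -/
def tabPerm {n ℓ : ℕ} (lam : Fin ℓ → ℕ) (σ : Equiv.Perm (Fin n))
    (f : {f : Fin n → Fin ℓ // TabP lam f}) : {f : Fin n → Fin ℓ // TabP lam f} :=
  ⟨fun a => f.1 (σ a), fun i => by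
    have := card_fiber_comp f.1 σ i
    simpa [this] using f.2 i⟩

section
variable {n : ℕ} (N : ℕ)

lemma perm_lt_of_fixes {n : ℕ} (N : ℕ) (σ : Equiv.Perm (Fin n))
    (hσ : ∀ a : Fin n, N ≤ (a : ℕ) → σ a = a) (a : Fin n) (ha : (a : ℕ) < N) :
    (σ a : ℕ) < N := by
  by_contra hc
  push_neg at hc
  have h1 : σ (σ a) = σ a := hσ (σ a) hc
  have h2 : σ a = a := σ.injective h1
  rw [h2] at hc
  omega

lemma perm_comm_of_disjoint {n : ℕ} (N : ℕ) (σ h : Equiv.Perm (Fin n))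
    (hσ : ∀ a : Fin n, N ≤ (a : ℕ) → σ a = a)
    (hh : ∀ a : Fin n, (a : ℕ) < N → h a = a) (a : Fin n) :
    σ (h a) = h (σ a) := by
  by_cases ha : (a : ℕ) < N
  · rw [hh a ha, hh (σ a) (perm_lt_of_fixes N σ hσ a ha)]
  · push_neg at ha
    rw [hσ a ha]
    have hb : N ≤ (h a : ℕ) := by
      by_contra hc
      push_neg at hc
      have h1 : h (h a) = h a := hh (h a) hc
      have h2 : h a = a := h.injective h1
      rw [h2] at hc
      omega
    rw [hσ (h a) hb]

end

/-- The action of a permutation `σ` fixing the last points (those with index `≥ N`)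
pointwise on the `H`-fixed tableaux of shape `lam`, where `H` is a subgroup whose
elements fix the first `N` points pointwise. -/
def fixPerm {n ℓ : ℕ} (N : ℕ) (lam : Fin ℓ → ℕ) (H : Subgroup (Equiv.Perm (Fin n)))
    (hH : ∀ h ∈ H, ∀ a : Fin n, (a : ℕ) < N → h a = a)
    (σ : Equiv.Perm (Fin n)) (hσ : ∀ a : Fin n, N ≤ (a : ℕ) → σ a = a)
    (f : {f : Fin n → Fin ℓ // TabP lam f ∧ ∀ h ∈ H, f ∘ ⇑h⁻¹ = f}) :
    {f : Fin n → Fin ℓ // TabP lam f ∧ ∀ h ∈ H, f ∘ ⇑h⁻¹ = f} :=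
  ⟨fun a => f.1 (σ a),
    ⟨fun i => by
      have := card_fiber_comp f.1 σ i
      simpa [this] using f.2.1 i,
    fun h hh => by
      funext a
      have hcomm : σ (h⁻¹ a) = h⁻¹ (σ a) :=
        perm_comm_of_disjoint N σ h⁻¹ hσ (hH h⁻¹ (inv_mem hh)) a
      have hfix := congrFun (f.2.2 h hh) (σ a)
      simp only [Function.comp_apply] at hfix ⊢
      rw [hcomm, hfix]⟩⟩

/-- The submodule of `k`-linear maps `W₁ → W₂` commuting with two families of
operators indexed by the same type (the space of equivariant maps). -/
def commutant (k : Type*) [Field k] {W₁ W₂ : Type*} [AddCommGroup W₁] [Module k W₁]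
    [AddCommGroup W₂] [Module k W₂] {ι : Sort*}
    (A₁ : ι → (W₁ →ₗ[k] W₁)) (A₂ : ι → (W₂ →ₗ[k] W₂)) :
    Submodule k (W₁ →ₗ[k] W₂) where
  carrier := {T | ∀ i : ι, T ∘ₗ A₁ i = A₂ i ∘ₗ T}
  add_mem' := by
    intro a b ha hb i
    rw [LinearMap.add_comp, LinearMap.comp_add, ha i, hb i]
  zero_mem' := by
    intro i
    rw [LinearMap.zero_comp, LinearMap.comp_zero]
  smul_mem' := by
    intro c a ha i
    rw [LinearMap.smul_comp, LinearMap.comp_smul, ha i]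


lemma card_filter_comp {α : Type*} [Fintype α] (P : α → Prop) [DecidablePred P]
    (σ : Equiv.Perm α) :
    (Finset.univ.filter fun a => P (σ a)).card = (Finset.univ.filter P).card := by
  have h : (Finset.univ.filter P) =
      (Finset.univ.filter fun a => P (σ a)).map σ.toEmbedding := by
    ext b
    simp only [Finset.mem_filter, Finset.mem_univ, true_and, Finset.mem_map,
      Equiv.coe_toEmbedding]
    constructor
    · intro hb
      exact ⟨σ.symm b, by simpa using hb, by simp⟩
    · rintro ⟨a, ha, rfl⟩
      exact ha
  rw [h, Finset.card_map]

lemma glue {α β : Type*} [Fintype α] [DecidableEq β] (h h' : α → β)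
    (hc : ∀ z, (Finset.univ.filter fun a : α => h a = z).card =
      (Finset.univ.filter fun a : α => h' a = z).card) :
    ∃ σ : Equiv.Perm α, ∀ a, h (σ a) = h' a := by
  classical
  have e : ∀ z, {a // h' a = z} ≃ {a // h a = z} := fun z =>
    Fintype.equivOfCardEq (by rw [Fintype.card_subtype, Fintype.card_subtype]; exact (hc z).symm)
  refine ⟨((Equiv.sigmaFiberEquiv h').symm.trans
    ((Equiv.sigmaCongrRight e).trans (Equiv.sigmaFiberEquiv h))), fun a => ?_⟩
  exact (e (h' a) ⟨a, rfl⟩).2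

lemma card_filter_lt {n : ℕ} (N : ℕ) (hN : N ≤ n) :
    (Finset.univ.filter fun a : Fin n => (a : ℕ) < N).card = N := by
  have h : (Finset.univ.filter fun a : Fin n => (a : ℕ) < N)
      = Finset.univ.map (Fin.castLEEmb hN) := by
    ext a
    simp only [Finset.mem_filter, Finset.mem_univ, true_and, Finset.mem_map]
    constructor
    · intro ha
      refine ⟨⟨(a : ℕ), ha⟩, ?_⟩
      apply Fin.ext
      rfl
    · rintro ⟨b, rfl⟩
      simpa using b.isLt
  rw [h, Finset.card_map, Finset.card_univ, Fintype.card_fin]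

lemma card_filter_not_lt {n : ℕ} (N : ℕ) (hN : N ≤ n) :
    (Finset.univ.filter fun a : Fin n => ¬ (a : ℕ) < N).card = n - N := by
  have h2 := Finset.card_filter_add_card_filter_not
    (s := (Finset.univ : Finset (Fin n))) (p := fun a : Fin n => (a : ℕ) < N)
  rw [card_filter_lt N hN, Finset.card_univ, Fintype.card_fin] at h2
  omega

lemma card_filter_ge {n : ℕ} (N : ℕ) (hN : N ≤ n) :
    (Finset.univ.filter fun a : Fin n => N ≤ (a : ℕ)).card = n - N := by
  rw [← card_filter_not_lt N hN]
  congr 1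
  apply Finset.filter_congr
  intro a _
  simp [not_lt]

def permOfSubtypes {α : Type*} (p q : α → Prop) [DecidablePred p] [DecidablePred q]
    (e₁ : {a // p a} ≃ {a // q a}) (e₂ : {a // ¬ p a} ≃ {a // ¬ q a}) : Equiv.Perm α :=
  (Equiv.sumCompl p).symm.trans ((e₁.sumCongr e₂).trans (Equiv.sumCompl q))

lemma permOfSubtypes_pos {α : Type*} (p q : α → Prop) [DecidablePred p] [DecidablePred q]
    (e₁ : {a // p a} ≃ {a // q a}) (e₂ : {a // ¬ p a} ≃ {a // ¬ q a}) (a : α) (ha : p a) :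
    permOfSubtypes p q e₁ e₂ a = ↑(e₁ ⟨a, ha⟩) := by
  simp [permOfSubtypes, Equiv.sumCompl_symm_apply_of_pos ha]

lemma permOfSubtypes_neg {α : Type*} (p q : α → Prop) [DecidablePred p] [DecidablePred q]
    (e₁ : {a // p a} ≃ {a // q a}) (e₂ : {a // ¬ p a} ≃ {a // ¬ q a}) (a : α) (ha : ¬ p a) :
    permOfSubtypes p q e₁ e₂ a = ↑(e₂ ⟨a, ha⟩) := by
  simp [permOfSubtypes, Equiv.sumCompl_symm_apply_of_neg ha]

lemma count_split {n : ℕ} {β : Type*} [DecidableEq β] (N : ℕ) (hN : N ≤ n)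
    (h : Fin n → β) (z₀ : β) (h0 : ∀ a : Fin n, N ≤ (a : ℕ) → h a = z₀) (z : β) :
    (Finset.univ.filter fun a : Fin n => h a = z).card =
      (Finset.univ.filter fun a : Fin n => (a : ℕ) < N ∧ h a = z).card +
        (if z = z₀ then n - N else 0) := by
  classical
  have hsplit := Finset.card_filter_add_card_filter_not
    (s := Finset.univ.filter fun a : Fin n => h a = z) (p := fun a : Fin n => (a : ℕ) < N)
  rw [Finset.filter_filter, Finset.filter_filter] at hsplit
  have h1 : (Finset.univ.filter fun a : Fin n => h a = z ∧ (a : ℕ) < N)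
      = Finset.univ.filter fun a : Fin n => (a : ℕ) < N ∧ h a = z := by
    apply Finset.filter_congr; intro a _; exact and_comm
  have h2 : (Finset.univ.filter fun a : Fin n => h a = z ∧ ¬ (a : ℕ) < N).card
      = if z = z₀ then n - N else 0 := by
    by_cases hz : z = z₀
    · rw [if_pos hz]
      have he : (Finset.univ.filter fun a : Fin n => h a = z ∧ ¬ (a : ℕ) < N)
          = Finset.univ.filter fun a : Fin n => ¬ (a : ℕ) < N := by
        apply Finset.filter_congr
        intro a _
        constructor
        · rintro ⟨-, hh⟩; exact hh
        · intro hh; exact ⟨(h0 a (le_of_not_gt hh)).trans hz.symm, hh⟩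
      rw [he, card_filter_not_lt N hN]
    · rw [if_neg hz, Finset.card_eq_zero, Finset.filter_eq_empty_iff]
      rintro a - ⟨hhz, hge⟩
      exact hz (hhz.symm.trans (h0 a (le_of_not_gt hge)))
  rw [h1, h2] at hsplit
  omega

section GEN

variable {k : Type*} [Field k] {X Y Z : Type*} [Fintype X] [Fintype Y]
  [DecidableEq X] {ι : Type*}

/-- the linear map sending `N : range c → k` to the "integral operator" with kernel
`N ∘ c`. -/
noncomputable def thetaAux (k : Type*) [Field k] {X Y Z : Type*} [Fintype X] (c : Y → X → Z) :
    ((Set.range fun p : Y × X => c p.1 p.2) → k) →ₗ[k] ((X → k) →ₗ[k] (Y → k)) where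
  toFun := fun N =>
    { toFun := fun φ y => ∑ x, N ⟨c y x, ⟨(y, x), rfl⟩⟩ * φ x
      map_add' := by
        intro φ ψ
        funext y
        simp [mul_add, Finset.sum_add_distrib]
      map_smul' := by
        intro r φ
        funext y
        simp [Finset.mul_sum, mul_left_comm] }
  map_add' := by
    intro N M
    apply LinearMap.ext
    intro φ
    funext y
    simp [add_mul, Finset.sum_add_distrib]
  map_smul' := by
    intro r N
    apply LinearMap.ext
    intro φ
    funext y
    simp [Finset.mul_sum, mul_assoc]

lemma gen_finrank (u : ι → X → X) (uinv : ι → X → X)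
    (hu1 : ∀ i, Function.LeftInverse (uinv i) (u i))
    (hu2 : ∀ i, Function.RightInverse (uinv i) (u i))
    (v : ι → Y → Y) (c : Y → X → Z)
    (hcinv : ∀ i y x, c (v i y) (u i x) = c y x)
    (hclass : ∀ y x y' x', c y x = c y' x' → ∃ i, y' = v i y ∧ x' = u i x) :
    Module.finrank k (commutant k (fun i => LinearMap.funLeft k k (u i))
        (fun i => LinearMap.funLeft k k (v i))) =
      Nat.card (Set.range fun p : Y × X => c p.1 p.2) := by
  classical
  haveI : Fintype (Set.range fun p : Y × X => c p.1 p.2) := Fintype.ofFinite _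
  set Θ := thetaAux k c (X := X) (Y := Y) with hΘ
  have hg : ∀ (N : (Set.range fun p : Y × X => c p.1 p.2) → k) (φ : X → k) (y : Y),
      Θ N φ y = ∑ x, N ⟨c y x, ⟨(y, x), rfl⟩⟩ * φ x := fun _ _ _ => rfl
  have hrange : LinearMap.range Θ = commutant k (fun i => LinearMap.funLeft k k (u i))
      (fun i => LinearMap.funLeft k k (v i)) := by
    apply le_antisymm
    · rintro T ⟨N, rfl⟩
      intro i
      apply LinearMap.ext
      intro φ
      funext y
      show Θ N (φ ∘ u i) y = Θ N φ (v i y)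
      rw [hg, hg]
      let e : X ≃ X := ⟨u i, uinv i, hu1 i, hu2 i⟩
      refine Fintype.sum_equiv e _ _ fun x => ?_
      show N ⟨c y x, _⟩ * φ (u i x) = N ⟨c (v i y) (u i x), _⟩ * φ (u i x)
      have hgg : (⟨c y x, ⟨(y, x), rfl⟩⟩ :
            (Set.range fun p : Y × X => c p.1 p.2)) =
          ⟨c (v i y) (u i x), ⟨(v i y, u i x), rfl⟩⟩ := Subtype.ext (hcinv i y x).symm
      rw [hgg]
    · intro T hT
      have hT' : ∀ i (φ : X → k) y, T (φ ∘ u i) y = T φ (v i y) := by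
        intro i φ y
        exact congrFun (LinearMap.congr_fun (hT i) φ) y
      set M : Y → X → k := fun y x => T (Pi.single x 1) y with hM
      have hMc : ∀ y x y' x', c y x = c y' x' → M y x = M y' x' := by
        intro y x y' x' h
        obtain ⟨i, rfl, rfl⟩ := hclass y x _ _ h
        have hps : Pi.single (u i x) 1 ∘ u i = Pi.single x (1 : k) := by
          funext a
          by_cases hax : a = x
          · subst hax
            simp
          · have hne : u i a ≠ u i x := fun hcon => hax ((hu1 i).injective hcon)
            simp [Pi.single_apply, hax, hne]
        calc M y x = T (Pi.single (u i x) 1 ∘ u i) y := by rw [hps]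
          _ = T (Pi.single (u i x) 1) (v i y) := hT' i _ y
      refine ⟨fun z => M (Classical.choose z.2).1 (Classical.choose z.2).2, ?_⟩
      apply LinearMap.ext
      intro φ
      funext y
      rw [hg]
      have hNg : ∀ (y' : Y) (x' : X),
          M (Classical.choose (⟨c y' x', ⟨(y', x'), rfl⟩⟩ :
            (Set.range fun p : Y × X => c p.1 p.2)).2).1
            (Classical.choose (⟨c y' x', ⟨(y', x'), rfl⟩⟩ :
            (Set.range fun p : Y × X => c p.1 p.2)).2).2 = M y' x' := by
        intro y' x'
        exact hMc _ _ _ _ (Classical.choose_spec (⟨c y' x', ⟨(y', x'), rfl⟩⟩ :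
            (Set.range fun p : Y × X => c p.1 p.2)).2)
      calc ∑ x, (fun z : (Set.range fun p : Y × X => c p.1 p.2) =>
              M (Classical.choose z.2).1 (Classical.choose z.2).2) ⟨c y x, ⟨(y, x), rfl⟩⟩ * φ x
          = ∑ x, M y x * φ x := by
            refine Finset.sum_congr rfl fun x _ => ?_
            rw [show (fun z : (Set.range fun p : Y × X => c p.1 p.2) =>
              M (Classical.choose z.2).1 (Classical.choose z.2).2) ⟨c y x, ⟨(y, x), rfl⟩⟩
              = M y x from hNg y x]
        _ = T φ y := by
            have hφ : φ = ∑ x, Pi.single x (φ x) := by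
              funext i
              rw [Finset.sum_apply]
              exact (Fintype.sum_pi_single i φ).symm
            conv_rhs => rw [hφ]
            rw [map_sum, Finset.sum_apply]
            refine Finset.sum_congr rfl fun x _ => ?_
            have hsm : Pi.single x (φ x) = φ x • (Pi.single x 1 : X → k) := by
              funext a
              simp [Pi.single_apply, mul_ite]
            rw [hsm, map_smul]
            simp [hM, mul_comm]
  have hinj : Function.Injective Θ := by
    rw [injective_iff_map_eq_zero]
    intro N hN0
    funext z
    obtain ⟨z, hz⟩ := z
    obtain ⟨⟨y, x⟩, rfl⟩ := hz
    have h1 : Θ N (Pi.single x 1) y = 0 := by rw [hN0]; rfl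
    rw [hg] at h1
    simp only [Pi.single_apply, mul_ite, mul_one, mul_zero] at h1
    rw [Finset.sum_ite_eq' Finset.univ x
      (fun x' => N ⟨c y x', ⟨(y, x'), rfl⟩⟩)] at h1 <;> try skip
    simp only [Finset.mem_univ, if_true] at h1
    exact h1
  rw [← hrange, LinearMap.finrank_range_of_inj hinj,
    Module.finrank_fintype_fun_eq_card, Nat.card_eq_fintype_card]

end GEN

lemma perm_inv_fixes {n : ℕ} (N : ℕ) (σ : Equiv.Perm (Fin n))
    (hσ : ∀ a : Fin n, N ≤ (a : ℕ) → σ a = a) (a : Fin n) (ha : N ≤ (a : ℕ)) :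
    σ⁻¹ a = a := by
  conv_lhs => rw [← hσ a ha]
  exact σ.symm_apply_apply a

lemma fixed_const_zero {n ℓ : ℕ} (hl : 0 < ℓ) (q : ℕ) (hqn : q ≤ n)
    (lam : Fin ℓ → ℕ) (hlsum : ∑ i, lam i = n) (hst : n - lam ⟨0, hl⟩ < q)
    (H : Subgroup (Equiv.Perm (Fin n)))
    (htrans : ∀ a b : Fin n, n - q ≤ (a : ℕ) → n - q ≤ (b : ℕ) → ∃ σ ∈ H, σ a = b)
    (f : Fin n → Fin ℓ) (hf : TabP lam f) (hfix : ∀ h ∈ H, f ∘ ⇑h⁻¹ = f)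
    (a : Fin n) (ha : n - q ≤ (a : ℕ)) : f a = ⟨0, hl⟩ := by
  classical
  by_contra hne
  have hBsub : Finset.univ.filter (fun b : Fin n => n - q ≤ (b : ℕ)) ⊆
      Finset.univ.filter (fun b => f b = f a) := by
    intro b hb
    simp only [Finset.mem_filter, Finset.mem_univ, true_and] at hb ⊢
    obtain ⟨σ, hσH, hσ⟩ := htrans a b ha hb
    have hcf := congrFun (hfix σ hσH) b
    simp only [Function.comp_apply] at hcf
    rw [← hcf]
    have hib : σ⁻¹ b = a := by rw [← hσ]; exact σ.symm_apply_apply a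
    rw [hib]
  have hcard : q ≤ lam (f a) := by
    have h1 := card_filter_ge (n := n) (n - q) (by omega)
    have h2 := Finset.card_le_card hBsub
    have h3 : (Finset.univ.filter fun b => f b = f a).card = lam (f a) := hf (f a)
    omega
  have hsum2 : lam ⟨0, hl⟩ + lam (f a) ≤ n := by
    rw [← hlsum]
    have hsub : ({⟨0, hl⟩, f a} : Finset (Fin ℓ)) ⊆ Finset.univ := Finset.subset_univ _
    have hle := Finset.sum_le_sum_of_subset (f := lam) hsub
    rwa [Finset.sum_pair (fun hc => hne hc.symm)] at hle
  omega

lemma fixed_of_const {n ℓ : ℕ} (N : ℕ) (H : Subgroup (Equiv.Perm (Fin n)))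
    (hH : ∀ h ∈ H, ∀ a : Fin n, (a : ℕ) < N → h a = a)
    (f : Fin n → Fin ℓ) (z : Fin ℓ) (hz : ∀ a : Fin n, N ≤ (a : ℕ) → f a = z) :
    ∀ h ∈ H, f ∘ ⇑h⁻¹ = f := by
  intro h hh
  funext a
  simp only [Function.comp_apply]
  by_cases ha : (a : ℕ) < N
  · rw [hH h⁻¹ (inv_mem hh) a ha]
  · have hge : N ≤ ((h⁻¹ a : Fin n) : ℕ) := by
      by_contra hc
      push_neg at hc
      have h1 : h (h⁻¹ a) = h⁻¹ a := hH h hh _ hc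
      rw [show h (h⁻¹ a) = a from h.apply_symm_apply a] at h1
      rw [← h1] at hc
      exact ha hc
    rw [hz _ hge, hz _ (by omega)]

/-- for `p^r`-stable partitions `λ, μ` of `n` and a transitive subgroup
`H ≤ S_{p^r}`, the dimension of the space of `S_n`-equivariant linear maps
`k[Tab^λ] → k[Tab^μ]` equals the dimension of the space of `S_{n−p^r}`-equivariant
linear maps `k[(Tab^λ)^H] → k[(Tab^μ)^H]`. -/
theorem stmt10 (p r n ℓ m : ℕ) (hp : p.Prime) (hn : p ^ r ≤ n)
    (k : Type*) [Field k] (hl : 0 < ℓ) (hm : 0 < m)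
    (lam : Fin ℓ → ℕ) (hlanti : Antitone lam) (hlpos : ∀ i, 0 < lam i)
    (hlsum : ∑ i, lam i = n)
    (hlstab : n - lam ⟨0, hl⟩ < p ^ r ∧ n + p ^ r ≤ 2 * lam ⟨0, hl⟩)
    (mu : Fin m → ℕ) (hmanti : Antitone mu) (hmpos : ∀ j, 0 < mu j)
    (hmsum : ∑ j, mu j = n)
    (hmstab : n - mu ⟨0, hm⟩ < p ^ r ∧ n + p ^ r ≤ 2 * mu ⟨0, hm⟩)
    (H : Subgroup (Equiv.Perm (Fin n)))
    (hH : ∀ h ∈ H, ∀ a : Fin n, (a : ℕ) < n - p ^ r → h a = a)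
    (htrans : ∀ a b : Fin n, n - p ^ r ≤ (a : ℕ) → n - p ^ r ≤ (b : ℕ) →
      ∃ σ ∈ H, σ a = b) :
    Module.finrank k
      ↥(commutant k
        (fun σ : Equiv.Perm (Fin n) => LinearMap.funLeft k k (tabPerm lam σ))
        (fun σ : Equiv.Perm (Fin n) => LinearMap.funLeft k k (tabPerm mu σ))) =
    Module.finrank k
      ↥(commutant k
        (fun σ : {σ : Equiv.Perm (Fin n) // ∀ a : Fin n, n - p ^ r ≤ (a : ℕ) → σ a = a}
          => LinearMap.funLeft k k (fixPerm (n - p ^ r) lam H hH σ.1 σ.2))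
        (fun σ : {σ : Equiv.Perm (Fin n) // ∀ a : Fin n, n - p ^ r ≤ (a : ℕ) → σ a = a}
          => LinearMap.funLeft k k (fixPerm (n - p ^ r) mu H hH σ.1 σ.2))) := by
  classical
  haveI : Fintype {f : Fin n → Fin ℓ // TabP lam f} := Fintype.ofFinite _
  haveI : Fintype {f : Fin n → Fin m // TabP mu f} := Fintype.ofFinite _
  haveI : Fintype {f : Fin n → Fin ℓ // TabP lam f ∧ ∀ h ∈ H, f ∘ ⇑h⁻¹ = f} :=
    Fintype.ofFinite _
  haveI : Fintype {f : Fin n → Fin m // TabP mu f ∧ ∀ h ∈ H, f ∘ ⇑h⁻¹ = f} :=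
    Fintype.ofFinite _
  -- the joint fiber-count invariants
  let c1 : {f : Fin n → Fin m // TabP mu f} → {f : Fin n → Fin ℓ // TabP lam f} →
      (Fin ℓ × Fin m → ℕ) := fun y x z =>
    (Finset.univ.filter fun a : Fin n => (x.1 a, y.1 a) = z).card
  let c2 : {f : Fin n → Fin m // TabP mu f ∧ ∀ h ∈ H, f ∘ ⇑h⁻¹ = f} →
      {f : Fin n → Fin ℓ // TabP lam f ∧ ∀ h ∈ H, f ∘ ⇑h⁻¹ = f} →
      (Fin ℓ × Fin m → ℕ) := fun y x z =>
    (Finset.univ.filter fun a : Fin n => (a : ℕ) < n - p ^ r ∧ (x.1 a, y.1 a) = z).card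
  -- side 1
  have hu1 : ∀ σ : Equiv.Perm (Fin n),
      Function.LeftInverse (tabPerm lam σ⁻¹) (tabPerm lam σ) := by
    intro σ f
    apply Subtype.ext
    funext a
    show f.1 (σ (σ⁻¹ a)) = f.1 a
    rw [show σ (σ⁻¹ a) = a from σ.apply_symm_apply a]
  have hu2 : ∀ σ : Equiv.Perm (Fin n),
      Function.RightInverse (tabPerm lam σ⁻¹) (tabPerm lam σ) := by
    intro σ f
    apply Subtype.ext
    funext a
    show f.1 (σ⁻¹ (σ a)) = f.1 a
    rw [show σ⁻¹ (σ a) = a from σ.symm_apply_apply a]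
  have hcinv1 : ∀ (σ : Equiv.Perm (Fin n)) y x,
      c1 (tabPerm mu σ y) (tabPerm lam σ x) = c1 y x := by
    intro σ y x
    funext z
    exact card_filter_comp (fun a : Fin n => (x.1 a, y.1 a) = z) σ
  have hclass1 : ∀ y x y' x', c1 y x = c1 y' x' →
      ∃ σ : Equiv.Perm (Fin n), y' = tabPerm mu σ y ∧ x' = tabPerm lam σ x := by
    intro y x y' x' hcc
    obtain ⟨σ, hσ⟩ := glue (fun a : Fin n => (x.1 a, y.1 a))
      (fun a : Fin n => (x'.1 a, y'.1 a)) (fun z => congrFun hcc z)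
    refine ⟨σ, Subtype.ext (funext fun a => ?_), Subtype.ext (funext fun a => ?_)⟩
    · exact (Prod.ext_iff.1 (hσ a)).2.symm
    · exact (Prod.ext_iff.1 (hσ a)).1.symm
  have h1 := gen_finrank (k := k) (u := tabPerm lam) (uinv := fun σ => tabPerm lam σ⁻¹)
    hu1 hu2 (v := tabPerm mu) (c := c1) hcinv1 hclass1
  -- zero on the last block
  have hx0 : ∀ (x : {f : Fin n → Fin ℓ // TabP lam f ∧ ∀ h ∈ H, f ∘ ⇑h⁻¹ = f})
      (a : Fin n), n - p ^ r ≤ (a : ℕ) → x.1 a = ⟨0, hl⟩ := fun x a ha =>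
    fixed_const_zero hl (p ^ r) hn lam hlsum hlstab.1 H htrans x.1 x.2.1 x.2.2 a ha
  have hy0 : ∀ (y : {f : Fin n → Fin m // TabP mu f ∧ ∀ h ∈ H, f ∘ ⇑h⁻¹ = f})
      (a : Fin n), n - p ^ r ≤ (a : ℕ) → y.1 a = ⟨0, hm⟩ := fun y a ha =>
    fixed_const_zero hm (p ^ r) hn mu hmsum hmstab.1 H htrans y.1 y.2.1 y.2.2 a ha
  -- side 2
  have hv1 : ∀ i : {σ : Equiv.Perm (Fin n) // ∀ a : Fin n, n - p ^ r ≤ (a : ℕ) → σ a = a},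
      Function.LeftInverse
        (fixPerm (n - p ^ r) lam H hH (i.1)⁻¹ (perm_inv_fixes (n - p ^ r) i.1 i.2))
        (fixPerm (n - p ^ r) lam H hH i.1 i.2) := by
    intro i f
    apply Subtype.ext
    funext a
    show f.1 (i.1 ((i.1)⁻¹ a)) = f.1 a
    rw [show i.1 ((i.1)⁻¹ a) = a from i.1.apply_symm_apply a]
  have hv2 : ∀ i : {σ : Equiv.Perm (Fin n) // ∀ a : Fin n, n - p ^ r ≤ (a : ℕ) → σ a = a},
      Function.RightInverse
        (fixPerm (n - p ^ r) lam H hH (i.1)⁻¹ (perm_inv_fixes (n - p ^ r) i.1 i.2))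
        (fixPerm (n - p ^ r) lam H hH i.1 i.2) := by
    intro i f
    apply Subtype.ext
    funext a
    show f.1 ((i.1)⁻¹ (i.1 a)) = f.1 a
    rw [show (i.1)⁻¹ (i.1 a) = a from i.1.symm_apply_apply a]
  have hcinv2 : ∀ (i : {σ : Equiv.Perm (Fin n) // ∀ a : Fin n, n - p ^ r ≤ (a : ℕ) → σ a = a})
      y x, c2 (fixPerm (n - p ^ r) mu H hH i.1 i.2 y) (fixPerm (n - p ^ r) lam H hH i.1 i.2 x)
        = c2 y x := by
    intro i y x
    funext z
    show (Finset.univ.filter fun a : Fin n =>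
        (a : ℕ) < n - p ^ r ∧ (x.1 (i.1 a), y.1 (i.1 a)) = z).card = _
    have hstep : (Finset.univ.filter fun a : Fin n =>
        (a : ℕ) < n - p ^ r ∧ (x.1 (i.1 a), y.1 (i.1 a)) = z) =
        (Finset.univ.filter fun a : Fin n =>
        ((i.1 a : Fin n) : ℕ) < n - p ^ r ∧ (x.1 (i.1 a), y.1 (i.1 a)) = z) := by
      apply Finset.filter_congr
      intro a _
      constructor
      · rintro ⟨hlt, hpp⟩
        exact ⟨perm_lt_of_fixes (n - p ^ r) i.1 i.2 a hlt, hpp⟩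
      · rintro ⟨hlt, hpp⟩
        refine ⟨?_, hpp⟩
        by_contra hc
        rw [i.2 a (le_of_not_gt hc)] at hlt
        exact hc hlt
    rw [hstep]
    exact card_filter_comp
      (fun b : Fin n => (b : ℕ) < n - p ^ r ∧ (x.1 b, y.1 b) = z) i.1
  have hclass2 : ∀ y x y' x', c2 y x = c2 y' x' →
      ∃ i : {σ : Equiv.Perm (Fin n) // ∀ a : Fin n, n - p ^ r ≤ (a : ℕ) → σ a = a},
        y' = fixPerm (n - p ^ r) mu H hH i.1 i.2 y ∧
        x' = fixPerm (n - p ^ r) lam H hH i.1 i.2 x := by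
    intro y x y' x' hcc
    have hcnt : ∀ z, (Finset.univ.filter fun b : {a : Fin n // (a : ℕ) < n - p ^ r} =>
        (x.1 b.1, y.1 b.1) = z).card =
        (Finset.univ.filter fun b : {a : Fin n // (a : ℕ) < n - p ^ r} =>
        (x'.1 b.1, y'.1 b.1) = z).card := by
      intro z
      have e1 : (Finset.univ.filter fun b : {a : Fin n // (a : ℕ) < n - p ^ r} =>
          (x.1 b.1, y.1 b.1) = z).card =
          (Finset.univ.filter fun a : Fin n =>
            (a : ℕ) < n - p ^ r ∧ (x.1 a, y.1 a) = z).card := by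
        rw [← Fintype.card_subtype, ← Fintype.card_subtype]
        exact Fintype.card_congr (Equiv.subtypeSubtypeEquivSubtypeInter
          (fun a : Fin n => (a : ℕ) < n - p ^ r) (fun a : Fin n => (x.1 a, y.1 a) = z))
      have e2 : (Finset.univ.filter fun b : {a : Fin n // (a : ℕ) < n - p ^ r} =>
          (x'.1 b.1, y'.1 b.1) = z).card =
          (Finset.univ.filter fun a : Fin n =>
            (a : ℕ) < n - p ^ r ∧ (x'.1 a, y'.1 a) = z).card := by
        rw [← Fintype.card_subtype, ← Fintype.card_subtype]
        exact Fintype.card_congr (Equiv.subtypeSubtypeEquivSubtypeInter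
          (fun a : Fin n => (a : ℕ) < n - p ^ r) (fun a : Fin n => (x'.1 a, y'.1 a) = z))
      rw [e1, e2]
      exact congrFun hcc z
    obtain ⟨τ, hτ⟩ := glue (fun b : {a : Fin n // (a : ℕ) < n - p ^ r} =>
      (x.1 b.1, y.1 b.1)) (fun b => (x'.1 b.1, y'.1 b.1)) hcnt
    set σ := permOfSubtypes (fun a : Fin n => (a : ℕ) < n - p ^ r)
      (fun a : Fin n => (a : ℕ) < n - p ^ r) τ (Equiv.refl _) with hσdef
    have hσfix : ∀ a : Fin n, n - p ^ r ≤ (a : ℕ) → σ a = a := by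
      intro a ha
      rw [permOfSubtypes_neg _ _ _ _ a (by omega)]
      rfl
    have hσlt : ∀ (a : Fin n) (ha : (a : ℕ) < n - p ^ r), σ a = ↑(τ ⟨a, ha⟩) :=
      fun a ha => permOfSubtypes_pos _ _ _ _ a ha
    refine ⟨⟨σ, hσfix⟩, Subtype.ext (funext fun a => ?_), Subtype.ext (funext fun a => ?_)⟩
    · show y'.1 a = y.1 (σ a)
      by_cases ha : (a : ℕ) < n - p ^ r
      · rw [hσlt a ha]
        exact ((Prod.ext_iff.1 (hτ ⟨a, ha⟩)).2).symm
      · rw [hσfix a (by omega), hy0 y a (by omega), hy0 y' a (by omega)]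
    · show x'.1 a = x.1 (σ a)
      by_cases ha : (a : ℕ) < n - p ^ r
      · rw [hσlt a ha]
        exact ((Prod.ext_iff.1 (hτ ⟨a, ha⟩)).1).symm
      · rw [hσfix a (by omega), hx0 x a (by omega), hx0 x' a (by omega)]
  have h2 := gen_finrank (k := k)
    (u := fun i : {σ : Equiv.Perm (Fin n) // ∀ a : Fin n, n - p ^ r ≤ (a : ℕ) → σ a = a} =>
      fixPerm (n - p ^ r) lam H hH i.1 i.2)
    (uinv := fun i => fixPerm (n - p ^ r) lam H hH (i.1)⁻¹ (perm_inv_fixes (n - p ^ r) i.1 i.2))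
    hv1 hv2
    (v := fun i : {σ : Equiv.Perm (Fin n) // ∀ a : Fin n, n - p ^ r ≤ (a : ℕ) → σ a = a} =>
      fixPerm (n - p ^ r) mu H hH i.1 i.2)
    (c := c2) hcinv2 hclass2
  rw [h1, h2]
  -- now compare the two ranges of invariants
  let addD : (Fin ℓ × Fin m → ℕ) → (Fin ℓ × Fin m → ℕ) := fun M z =>
    M z + (if z = ((⟨0, hl⟩ : Fin ℓ), (⟨0, hm⟩ : Fin m)) then p ^ r else 0)
  have hkey : ∀ y x, c1 ⟨y.1, y.2.1⟩ ⟨x.1, x.2.1⟩ = addD (c2 y x) := by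
    intro y x
    funext z
    have hsp := count_split (n := n) (n - p ^ r) (Nat.sub_le _ _)
      (fun a : Fin n => (x.1 a, y.1 a)) ((⟨0, hl⟩ : Fin ℓ), (⟨0, hm⟩ : Fin m))
      (fun a ha => by show (x.1 a, y.1 a) = _; rw [hx0 x a ha, hy0 y a ha]) z
    rw [show n - (n - p ^ r) = p ^ r by omega] at hsp
    exact hsp
  let ψ : (Set.range fun pr :
        ({f : Fin n → Fin m // TabP mu f ∧ ∀ h ∈ H, f ∘ ⇑h⁻¹ = f} ×
         {f : Fin n → Fin ℓ // TabP lam f ∧ ∀ h ∈ H, f ∘ ⇑h⁻¹ = f}) => c2 pr.1 pr.2) →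
      (Set.range fun pr :
        ({f : Fin n → Fin m // TabP mu f} × {f : Fin n → Fin ℓ // TabP lam f}) =>
          c1 pr.1 pr.2) := fun w =>
    ⟨addD w.1, by
      obtain ⟨⟨y, x⟩, hw⟩ := w.2
      have hw' : c2 y x = w.1 := hw
      exact ⟨(⟨y.1, y.2.1⟩, ⟨x.1, x.2.1⟩), by
        show c1 ⟨y.1, y.2.1⟩ ⟨x.1, x.2.1⟩ = addD w.1
        rw [hkey y x, hw']⟩⟩
  have hinj : Function.Injective ψ := by
    intro w1 w2 heq
    apply Subtype.ext
    funext z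
    have hz := congrFun (congrArg Subtype.val heq) z
    exact Nat.add_right_cancel hz
  have hsurj : Function.Surjective ψ := by
    rintro ⟨Mv, hM⟩
    obtain ⟨⟨y, x⟩, hMv⟩ := hM
    have hMv' : c1 y x = Mv := hMv
    -- construct a fixed pair realizing `Mv - p^r δ`
    have hx0c := x.2 ⟨0, hl⟩
    have hy0c := y.2 ⟨0, hm⟩
    have hFcard : p ^ r ≤ (Finset.univ.filter fun a : Fin n =>
        (x.1 a, y.1 a) = ((⟨0, hl⟩ : Fin ℓ), (⟨0, hm⟩ : Fin m))).card := by
      have hinter : (Finset.univ.filter fun a : Fin n =>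
          (x.1 a, y.1 a) = ((⟨0, hl⟩ : Fin ℓ), (⟨0, hm⟩ : Fin m))) =
          (Finset.univ.filter fun a : Fin n => x.1 a = ⟨0, hl⟩) ∩
          (Finset.univ.filter fun a : Fin n => y.1 a = ⟨0, hm⟩) := by
        ext a
        simp only [Finset.mem_filter, Finset.mem_univ, true_and, Finset.mem_inter,
          Prod.mk.injEq]
      have hiu := Finset.card_inter_add_card_union
        (Finset.univ.filter fun a : Fin n => x.1 a = ⟨0, hl⟩)
        (Finset.univ.filter fun a : Fin n => y.1 a = ⟨0, hm⟩)
      have hule := Finset.card_le_univ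
        ((Finset.univ.filter fun a : Fin n => x.1 a = ⟨0, hl⟩) ∪
         (Finset.univ.filter fun a : Fin n => y.1 a = ⟨0, hm⟩))
      rw [Fintype.card_fin] at hule
      rw [hx0c, hy0c] at hiu
      rw [hinter]
      have hls := hlstab.2
      have hms := hmstab.2
      omega
    obtain ⟨F₀, hF₀sub, hF₀card⟩ := Finset.exists_subset_card_eq hFcard
    have hc1' : Fintype.card {a : Fin n // (a : ℕ) < n - p ^ r} = n - p ^ r := by
      rw [Fintype.card_subtype, card_filter_lt _ (Nat.sub_le _ _)]
    have hc2' : Fintype.card {a : Fin n // ¬ (a : ℕ) < n - p ^ r} = p ^ r := by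
      rw [Fintype.card_subtype, card_filter_not_lt _ (Nat.sub_le _ _)]
      omega
    have hcmem : Fintype.card {a : Fin n // a ∈ F₀} = p ^ r := by
      rw [Fintype.card_coe, hF₀card]
    have hcq1 : Fintype.card {a : Fin n // a ∉ F₀} = n - p ^ r := by
      have := Fintype.card_subtype_compl (fun a : Fin n => a ∈ F₀)
      rw [hcmem, Fintype.card_fin] at this
      exact this
    have hcq2 : Fintype.card {a : Fin n // ¬ a ∉ F₀} = p ^ r := by
      rw [Fintype.card_congr (Equiv.subtypeEquivRight (fun a : Fin n => not_not))]
      exact hcmem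
    let e₁ : {a : Fin n // (a : ℕ) < n - p ^ r} ≃ {a : Fin n // a ∉ F₀} :=
      Fintype.equivOfCardEq (by rw [hc1', hcq1])
    let e₂ : {a : Fin n // ¬ (a : ℕ) < n - p ^ r} ≃ {a : Fin n // ¬ a ∉ F₀} :=
      Fintype.equivOfCardEq (by rw [hc2', hcq2])
    set σ := permOfSubtypes (fun a : Fin n => (a : ℕ) < n - p ^ r)
      (fun a : Fin n => a ∉ F₀) e₁ e₂ with hσdef
    have hσB : ∀ a : Fin n, n - p ^ r ≤ (a : ℕ) →
        (x.1 (σ a), y.1 (σ a)) = ((⟨0, hl⟩ : Fin ℓ), (⟨0, hm⟩ : Fin m)) := by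
      intro a ha
      have hmem : σ a ∈ F₀ := by
        rw [permOfSubtypes_neg _ _ _ _ a (by omega)]
        exact not_not.1 (e₂ ⟨a, by omega⟩).2
      exact (Finset.mem_filter.1 (hF₀sub hmem)).2
    have hTx : TabP lam (fun a => x.1 (σ a)) :=
      fun i => (card_fiber_comp x.1 σ i).trans (x.2 i)
    have hTy : TabP mu (fun a => y.1 (σ a)) :=
      fun j => (card_fiber_comp y.1 σ j).trans (y.2 j)
    have hx''0 : ∀ a : Fin n, n - p ^ r ≤ (a : ℕ) → x.1 (σ a) = ⟨0, hl⟩ :=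
      fun a ha => (Prod.ext_iff.1 (hσB a ha)).1
    have hy''0 : ∀ a : Fin n, n - p ^ r ≤ (a : ℕ) → y.1 (σ a) = ⟨0, hm⟩ :=
      fun a ha => (Prod.ext_iff.1 (hσB a ha)).2
    have hXfix := fixed_of_const (n - p ^ r) H hH (fun a => x.1 (σ a)) ⟨0, hl⟩ hx''0
    have hYfix := fixed_of_const (n - p ^ r) H hH (fun a => y.1 (σ a)) ⟨0, hm⟩ hy''0
    refine ⟨⟨c2 ⟨fun a => y.1 (σ a), hTy, hYfix⟩ ⟨fun a => x.1 (σ a), hTx, hXfix⟩,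
      ⟨(⟨fun a => y.1 (σ a), hTy, hYfix⟩, ⟨fun a => x.1 (σ a), hTx, hXfix⟩), rfl⟩⟩, ?_⟩
    apply Subtype.ext
    show addD (c2 ⟨fun a => y.1 (σ a), hTy, hYfix⟩ ⟨fun a => x.1 (σ a), hTx, hXfix⟩) = Mv
    rw [← hkey ⟨fun a => y.1 (σ a), hTy, hYfix⟩ ⟨fun a => x.1 (σ a), hTx, hXfix⟩, ← hMv']
    funext z
    exact card_filter_comp (fun a : Fin n => (x.1 a, y.1 a) = z) σ
  exact (Nat.card_congr (Equiv.ofBijective ψ ⟨hinj, hsurj⟩)).symm
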